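/- Let 0 < ε < 1 and let φ be a simple martingale on a probability space with filtration {F_n}_{n≥0}, F_0 trivial, whose square function satisfies Sφ ≤ ε almost surely. Then E e^{φ_∞ − φ_0} ≤ e^{−ε}/(1 − ε). -/

import Mathlib

open MeasureTheory Filter


lemma aux_pos (a s : ℝ) (ha : -1 < a) (h0 : 0 ≤ s) (h1 : s ≤ 1) : 0 < 1 + a * s := by
  rcases le_total a 0 with h | h
  · nlinarith
  · nlinarith

lemma aux_deriv (a : ℝ) (ha : -1 < a) (s : ℝ) (h0 : 0 ≤ s) (h1 : s ≤ 1) :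
    HasDerivAt (fun t => a * t - Real.log (1 + a * t)) (a ^ 2 * s / (1 + a * s)) s := by
  have hpos : 0 < 1 + a * s := aux_pos a s ha h0 h1
  have h1' : HasDerivAt (fun t : ℝ => 1 + a * t) a s := by
    simpa using ((hasDerivAt_id s).const_mul a).const_add 1
  have h2 : HasDerivAt (fun t : ℝ => Real.log (1 + a * t)) (a / (1 + a * s)) s :=
    h1'.log hpos.ne'
  have h3 : HasDerivAt (fun t : ℝ => a * t) a s := by simpa using (hasDerivAt_id s).const_mul a
  have := h3.sub h2
  refine this.congr_deriv ?_
  rw [eq_div_iff hpos.ne', sub_mul, div_mul_cancel₀ _ hpos.ne']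
  ring

lemma g_integral (a : ℝ) (ha : -1 < a) :
    a - Real.log (1 + a) = ∫ s in (0:ℝ)..1, a ^ 2 * s / (1 + a * s) := by
  have hInt : IntervalIntegrable (fun s => a ^ 2 * s / (1 + a * s)) MeasureTheory.volume 0 1 := by
    apply ContinuousOn.intervalIntegrable
    apply ContinuousOn.div
    · fun_prop
    · fun_prop
    · intro s hs
      rw [Set.uIcc_of_le (by norm_num)] at hs
      exact (aux_pos a s ha hs.1 hs.2).ne'
  have := intervalIntegral.integral_eq_sub_of_hasDerivAt
    (f := fun t => a * t - Real.log (1 + a * t))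
    (fun s hs => by
      rw [Set.uIcc_of_le (by norm_num)] at hs
      exact aux_deriv a ha s hs.1 hs.2) hInt
  rw [this]
  simp
lemma key_ineq (ε x : ℝ) (hε0 : 0 < ε) (hε1 : ε < 1) (hx : -ε ≤ x) :
    x - Real.log (1 + x) ≤ x ^ 2 / ε ^ 2 * (-ε - Real.log (1 - ε)) := by
  have hx1 : -1 < x := by linarith
  have hε1' : (-1 : ℝ) < -ε := by linarith
  have hg : -ε - Real.log (1 - ε) = ∫ s in (0:ℝ)..1, ε ^ 2 * s / (1 - ε * s) := by
    have := g_integral (-ε) hε1'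
    simpa [sub_eq_add_neg, neg_mul] using this
  have hcont : ∀ a : ℝ, -1 < a → IntervalIntegrable (fun s => a ^ 2 * s / (1 + a * s))
      MeasureTheory.volume 0 1 := by
    intro a ha
    apply ContinuousOn.intervalIntegrable
    apply ContinuousOn.div
    · fun_prop
    · fun_prop
    · intro s hs
      rw [Set.uIcc_of_le (by norm_num)] at hs
      exact (aux_pos a s ha hs.1 hs.2).ne'
  rw [g_integral x hx1, hg, ← intervalIntegral.integral_const_mul]
  apply intervalIntegral.integral_mono_on (by norm_num) (hcont x hx1)
  · have := (hcont (-ε) hε1').const_mul (x ^ 2 / ε ^ 2)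
    simpa [sub_eq_add_neg, neg_mul] using this
  · intro s hs
    have hp1 : 0 < 1 + x * s := aux_pos x s hx1 hs.1 hs.2
    have hp2 : 0 < 1 - ε * s := by
      have := aux_pos (-ε) s hε1' hs.1 hs.2
      linarith
    have hle : 1 - ε * s ≤ 1 + x * s := by nlinarith [hs.1]
    have h1 : x ^ 2 * s / (1 + x * s) ≤ x ^ 2 * s / (1 - ε * s) :=
      div_le_div_of_nonneg_left (mul_nonneg (sq_nonneg x) hs.1) hp2 hle
    calc x ^ 2 * s / (1 + x * s) ≤ x ^ 2 * s / (1 - ε * s) := h1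
      _ = x ^ 2 / ε ^ 2 * (ε ^ 2 * s / (1 - ε * s)) := by
          field_simp

lemma pointwise_ineq (ε : ℝ) (hε0 : 0 < ε) (hε1 : ε < 1) (d : ℕ → ℝ) (n : ℕ)
    (hsum : ∑ k ∈ Finset.range n, d k ^ 2 ≤ ε ^ 2) :
    Real.exp (∑ k ∈ Finset.range n, d k) ≤
      Real.exp (-ε) / (1 - ε) * ∏ k ∈ Finset.range n, (1 + d k) := by
  have hdk : ∀ k ∈ Finset.range n, -ε ≤ d k := by
    intro k hk
    have h1 : d k ^ 2 ≤ ∑ j ∈ Finset.range n, d j ^ 2 :=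
      Finset.single_le_sum (fun j _ => sq_nonneg (d j)) hk
    nlinarith [sq_nonneg (d k + ε)]
  have hpos : ∀ k ∈ Finset.range n, (0:ℝ) < 1 + d k := by
    intro k hk; have := hdk k hk; linarith
  set c : ℝ := -ε - Real.log (1 - ε) with hc
  have hcnn : 0 ≤ c := by
    have := Real.log_le_sub_one_of_pos (show (0:ℝ) < 1 - ε by linarith)
    simp only [hc]; linarith
  have hsplit : (∑ k ∈ Finset.range n, d k) =
      (∑ k ∈ Finset.range n, Real.log (1 + d k)) +
      ∑ k ∈ Finset.range n, (d k - Real.log (1 + d k)) := by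
    rw [← Finset.sum_add_distrib]; apply Finset.sum_congr rfl; intro k _; ring
  have hgb : ∑ k ∈ Finset.range n, (d k - Real.log (1 + d k)) ≤ c := by
    calc ∑ k ∈ Finset.range n, (d k - Real.log (1 + d k))
        ≤ ∑ k ∈ Finset.range n, d k ^ 2 / ε ^ 2 * c := by
          apply Finset.sum_le_sum
          intro k hk
          exact key_ineq ε (d k) hε0 hε1 (hdk k hk)
      _ = (∑ k ∈ Finset.range n, d k ^ 2) / ε ^ 2 * c := by
          rw [← Finset.sum_mul, ← Finset.sum_div]
      _ ≤ ε ^ 2 / ε ^ 2 * c := by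
          apply mul_le_mul_of_nonneg_right _ hcnn
          apply div_le_div_of_nonneg_right hsum (by positivity)
      _ = c := by field_simp
  rw [hsplit, Real.exp_add]
  have hexp1 : Real.exp (∑ k ∈ Finset.range n, Real.log (1 + d k)) =
      ∏ k ∈ Finset.range n, (1 + d k) := by
    rw [Real.exp_sum]
    exact Finset.prod_congr rfl fun k hk => Real.exp_log (hpos k hk)
  have hexp2 : Real.exp (∑ k ∈ Finset.range n, (d k - Real.log (1 + d k))) ≤
      Real.exp (-ε) / (1 - ε) := by
    calc Real.exp (∑ k ∈ Finset.range n, (d k - Real.log (1 + d k)))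
        ≤ Real.exp c := Real.exp_le_exp.mpr hgb
      _ = Real.exp (-ε) / (1 - ε) := by
          rw [hc, Real.exp_sub, Real.exp_log (by linarith)]
  rw [hexp1]
  calc (∏ k ∈ Finset.range n, (1 + d k)) *
        Real.exp (∑ k ∈ Finset.range n, (d k - Real.log (1 + d k)))
      ≤ (∏ k ∈ Finset.range n, (1 + d k)) * (Real.exp (-ε) / (1 - ε)) := by
        apply mul_le_mul_of_nonneg_left hexp2
        exact Finset.prod_nonneg fun k hk => (hpos k hk).le
    _ = Real.exp (-ε) / (1 - ε) * ∏ k ∈ Finset.range n, (1 + d k) := by ring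

/-- If `0 < ε < 1` and the square function of a simple martingale `φ`
satisfies `Sφ ≤ ε` almost surely, then `E e^{φ_∞ − φ_0} ≤ e^{−ε}/(1 − ε)`. -/
theorem exponential_moment_estimate
    {X : Type*} {m : MeasurableSpace X} {μ : Measure X} [IsProbabilityMeasure μ]
    (ℱ : Filtration ℕ m) (hℱ0 : ℱ 0 = ⊥)
    (φ : ℕ → X → ℝ) (hmart : Martingale φ ℱ μ)
    (N : ℕ) (hsimple : ∀ n, N ≤ n → φ n = φ N)
    (ε : ℝ) (hε0 : 0 < ε) (hε1 : ε < 1)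
    (hS : ∀ᵐ ω ∂μ, Real.sqrt (∑' n, (φ (n + 1) ω - φ n ω) ^ 2) ≤ ε) :
    (∫ ω, Real.exp (φ N ω - φ 0 ω) ∂μ) ≤ Real.exp (-ε) / (1 - ε) := by
  set d : ℕ → X → ℝ := fun k ω => φ (k + 1) ω - φ k ω with hd
  set M : ℕ → X → ℝ := fun n ω => ∏ k ∈ Finset.range n, (1 + d k ω) with hM
  -- a.e. bound on all partial sums of squares
  have hae : ∀ᵐ ω ∂μ, ∀ n, ∑ k ∈ Finset.range n, d k ω ^ 2 ≤ ε ^ 2 := by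
    filter_upwards [hS] with ω hω n
    have hzero : ∀ b ∉ Finset.range N, (φ (b + 1) ω - φ b ω) ^ 2 = 0 := by
      intro b hb
      rw [Finset.mem_range, not_lt] at hb
      rw [hsimple (b + 1) (by omega), hsimple b hb]
      ring
    have hsummable : Summable (fun n => (φ (n + 1) ω - φ n ω) ^ 2) :=
      summable_of_ne_finset_zero hzero
    have h1 : ∑ k ∈ Finset.range n, d k ω ^ 2 ≤ ∑' n, (φ (n + 1) ω - φ n ω) ^ 2 :=
      Summable.sum_le_tsum _ (fun i _ => sq_nonneg _) hsummable
    have h2 : (0:ℝ) ≤ ∑' n, (φ (n + 1) ω - φ n ω) ^ 2 := tsum_nonneg fun i => sq_nonneg _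
    nlinarith [Real.sq_sqrt h2, Real.sqrt_nonneg (∑' n, (φ (n + 1) ω - φ n ω) ^ 2)]
  -- a.e. bound on increments
  have haeb : ∀ᵐ ω ∂μ, ∀ k, -ε ≤ d k ω ∧ d k ω ≤ ε := by
    filter_upwards [hae] with ω hω k
    have h1 : d k ω ^ 2 ≤ ε ^ 2 := by
      have h0 := hω (k + 1)
      have h2 : d k ω ^ 2 ≤ ∑ j ∈ Finset.range (k + 1), d j ω ^ 2 :=
        Finset.single_le_sum (f := fun j => d j ω ^ 2) (fun j _ => sq_nonneg _) (Finset.self_mem_range_succ k)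
      linarith
    constructor <;> nlinarith [sq_nonneg (d k ω + ε), sq_nonneg (d k ω - ε)]
  -- measurability
  have hdm : ∀ k, StronglyMeasurable[ℱ (k + 1)] (d k) := fun k =>
    (hmart.stronglyAdapted (k + 1)).sub ((hmart.stronglyAdapted k).mono (ℱ.mono (Nat.le_succ k)))
  have hMm : ∀ n, StronglyMeasurable[ℱ n] (M n) := by
    intro n
    apply Finset.stronglyMeasurable_fun_prod
    intro k hk
    rw [Finset.mem_range] at hk
    exact stronglyMeasurable_const.add ((hdm k).mono (ℱ.mono hk))
  -- a.e. bound on M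
  have hMbd : ∀ n, ∀ᵐ ω ∂μ, 0 ≤ M n ω ∧ M n ω ≤ (1 + ε) ^ n := by
    intro n
    filter_upwards [haeb] with ω hω
    constructor
    · exact Finset.prod_nonneg fun k _ => by have := (hω k).1; linarith
    · calc M n ω ≤ ∏ _k ∈ Finset.range n, (1 + ε) :=
            Finset.prod_le_prod (fun k _ => by have := (hω k).1; linarith)
              (fun k _ => by have := (hω k).2; linarith)
        _ = (1 + ε) ^ n := by simp
  -- integrability
  have hdint : ∀ k, Integrable (d k) μ := fun k =>
    (hmart.integrable (k + 1)).sub (hmart.integrable k)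
  have hMint : ∀ n, Integrable (M n) μ := by
    intro n
    apply Integrable.mono' (integrable_const ((1 + ε) ^ n))
      ((hMm n).mono (ℱ.le n)).aestronglyMeasurable
    filter_upwards [hMbd n] with ω hω
    rw [Real.norm_eq_abs, abs_of_nonneg hω.1]
    exact hω.2
  have hMdint : ∀ n, Integrable (M n * d n) μ := by
    intro n
    apply Integrable.mono' (integrable_const ((1 + ε) ^ n * ε))
      ((((hMm n).mono (ℱ.le n)).mul ((hdm n).mono (ℱ.le (n + 1)))).aestronglyMeasurable)
    filter_upwards [hMbd n, haeb] with ω h1 h2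
    rw [Pi.mul_apply, Real.norm_eq_abs, abs_mul, abs_of_nonneg h1.1]
    have hab : |d n ω| ≤ ε := abs_le.mpr ⟨(h2 n).1, (h2 n).2⟩
    have hMn : 0 ≤ M n ω := h1.1
    exact mul_le_mul h1.2 hab (abs_nonneg _) (by positivity)
  -- zero expectation of M n * d n
  have hzero : ∀ n, ∫ ω, (M n * d n) ω ∂μ = 0 := by
    intro n
    have hdeq : d n = φ (n + 1) - φ n := rfl
    have hd0 : μ[d n|ℱ n] =ᵐ[μ] 0 := by
      have h1 : μ[φ (n + 1)|ℱ n] =ᵐ[μ] φ n := hmart.condExp_ae_eq (Nat.le_succ n)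
      have h2 : μ[φ n|ℱ n] = φ n :=
        condExp_of_stronglyMeasurable (ℱ.le n) (hmart.stronglyAdapted n) (hmart.integrable n)
      calc μ[d n|ℱ n] =ᵐ[μ] μ[φ (n + 1)|ℱ n] - μ[φ n|ℱ n] := by
              rw [hdeq]; exact condExp_sub (hmart.integrable (n + 1)) (hmart.integrable n) _
        _ =ᵐ[μ] φ n - φ n := h1.sub (EventuallyEq.of_eq h2)
        _ = 0 := by simp
    have hmul : μ[M n * d n|ℱ n] =ᵐ[μ] M n * μ[d n|ℱ n] :=
      condExp_mul_of_stronglyMeasurable_left (hMm n) (hMdint n) (hdint n)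
    calc ∫ ω, (M n * d n) ω ∂μ = ∫ ω, (μ[M n * d n|ℱ n]) ω ∂μ :=
          (integral_condExp (μ := μ) (f := M n * d n) (ℱ.le n)).symm
      _ = ∫ ω, (M n * μ[d n|ℱ n]) ω ∂μ := integral_congr_ae hmul
      _ = 0 := by
          rw [integral_congr_ae (show M n * μ[d n|ℱ n] =ᵐ[μ] 0 by
            filter_upwards [hd0] with ω h
            simp [h])]
          simp
  -- expectation of M n is 1
  have hMint1 : ∀ n, ∫ ω, M n ω ∂μ = 1 := by
    intro n
    induction n with
    | zero => simp [hM]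
    | succ n ih =>
      have heq : ∀ ω, M (n + 1) ω = M n ω + (M n * d n) ω := by
        intro ω
        simp only [hM, Finset.prod_range_succ, Pi.mul_apply]
        ring
      calc ∫ ω, M (n + 1) ω ∂μ = ∫ ω, (M n ω + (M n * d n) ω) ∂μ := by
            simp only [heq]
        _ = ∫ ω, M n ω ∂μ + ∫ ω, (M n * d n) ω ∂μ := integral_add (hMint n) (hMdint n)
        _ = 1 := by rw [ih, hzero n]; ring
  -- pointwise bound
  have hfin : ∀ᵐ ω ∂μ, Real.exp (φ N ω - φ 0 ω) ≤ Real.exp (-ε) / (1 - ε) * M N ω := by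
    filter_upwards [hae] with ω hω
    have htel : φ N ω - φ 0 ω = ∑ k ∈ Finset.range N, d k ω :=
      (Finset.sum_range_sub (fun k => φ k ω) N).symm
    rw [htel]
    exact pointwise_ineq ε hε0 hε1 (fun k => d k ω) N (hω N)
  have hCnn : 0 ≤ Real.exp (-ε) / (1 - ε) :=
    div_nonneg (Real.exp_nonneg _) (by linarith)
  have hexpint : Integrable (fun ω => Real.exp (φ N ω - φ 0 ω)) μ := by
    apply Integrable.mono' (integrable_const (Real.exp (-ε) / (1 - ε) * (1 + ε) ^ N))
    · exact (Real.continuous_exp.comp_stronglyMeasurable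
        (((hmart.stronglyAdapted N).mono (ℱ.le N)).sub
          ((hmart.stronglyAdapted 0).mono (ℱ.le 0)))).aestronglyMeasurable
    · filter_upwards [hfin, hMbd N] with ω h1 h2
      rw [Real.norm_eq_abs, abs_of_nonneg (Real.exp_nonneg _)]
      calc Real.exp (φ N ω - φ 0 ω) ≤ Real.exp (-ε) / (1 - ε) * M N ω := h1
        _ ≤ Real.exp (-ε) / (1 - ε) * (1 + ε) ^ N :=
            mul_le_mul_of_nonneg_left h2.2 hCnn
  calc ∫ ω, Real.exp (φ N ω - φ 0 ω) ∂μ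
      ≤ ∫ ω, Real.exp (-ε) / (1 - ε) * M N ω ∂μ :=
        integral_mono_ae hexpint ((hMint N).const_mul _) hfin
    _ = Real.exp (-ε) / (1 - ε) * ∫ ω, M N ω ∂μ := integral_const_mul _ _
    _ = Real.exp (-ε) / (1 - ε) := by rw [hMint1 N]; ring
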